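/- Let X be a compact pointed metric space and let ((x_n,y_n))_{n=1}^∞ be a Lipschitz interpolating sequence for Lip_0(X) in X² (x_n ≠ y_n). Then d(x_n, y_n) → 0 as n → ∞. -/

import Mathlib

open Filter

/-- Let `X` be a compact pointed metric space and
`((x n, y n))_{n∈ℕ}` a Lipschitz interpolating sequence for `Lip₀(X)` (with
`x n ≠ y n`). Then `d(x n, y n) → 0`. -/
theorem stmt17 {X : Type*} [MetricSpace X] [CompactSpace X] (z : X) (x y : ℕ → X)
    (hxy : ∀ n, x n ≠ y n)
    (hinterp : ∀ α : ℕ → ℝ, (∃ C, ∀ n, |α n| ≤ C) →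
      ∃ f : X → ℝ, f z = 0 ∧ (∃ K : ℝ, ∀ a b : X, |f a - f b| ≤ K * dist a b) ∧
        ∀ n, (f (x n) - f (y n)) / dist (x n) (y n) = α n) :
    Filter.Tendsto (fun n => dist (x n) (y n)) Filter.atTop (nhds 0) := by
  classical
  by_contra hcon
  rw [Metric.tendsto_atTop] at hcon
  push_neg at hcon
  obtain ⟨ε, hε, hfreq⟩ := hcon
  have hfreq' : ∀ N, ∃ n ≥ N, ε ≤ dist (x n) (y n) := by
    intro N
    obtain ⟨n, hn, h⟩ := hfreq N
    exact ⟨n, hn, by simpa [Real.dist_eq, abs_of_nonneg dist_nonneg] using h⟩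
  obtain ⟨φ₁, hφ₁, h1⟩ :=
    Filter.extraction_of_frequently_atTop (Filter.frequently_atTop.mpr hfreq')
  obtain ⟨a, -, φ₂, hφ₂, ha⟩ :=
    isCompact_univ.tendsto_subseq (fun n => Set.mem_univ (x (φ₁ n)))
  obtain ⟨b, -, φ₃, hφ₃, hb⟩ :=
    isCompact_univ.tendsto_subseq (fun n => Set.mem_univ ((fun m => y (φ₁ (φ₂ m))) n))
  set ψ : ℕ → ℕ := fun j => φ₁ (φ₂ (φ₃ j)) with hψdef
  have hψmono : StrictMono ψ := hφ₁.comp (hφ₂.comp hφ₃)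
  have hxlim : Tendsto (fun j => x (ψ j)) atTop (nhds a) := by
    have := ha.comp hφ₃.tendsto_atTop
    exact this
  have hylim : Tendsto (fun j => y (ψ j)) atTop (nhds b) := by
    exact hb
  have hdlim : Tendsto (fun j => dist (x (ψ j)) (y (ψ j))) atTop (nhds (dist a b)) :=
    hxlim.dist hylim
  have hdge : ε ≤ dist a b :=
    ge_of_tendsto hdlim (Filter.Eventually.of_forall fun j => h1 (φ₂ (φ₃ j)))
  have hdne : dist a b ≠ 0 := ne_of_gt (lt_of_lt_of_le hε hdge)
  -- alternating sign sequence supported on the subsequence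
  set α : ℕ → ℝ := fun n => if ∃ j, ψ j = n ∧ Even j then 1 else -1 with hαdef
  have hαbd : ∃ C, ∀ n, |α n| ≤ C := by
    refine ⟨1, fun n => ?_⟩
    by_cases h : ∃ j, ψ j = n ∧ Even j <;> simp [hαdef, h]
  have hαψ : ∀ j, α (ψ j) = if Even j then 1 else -1 := by
    intro j
    by_cases hj : Even j
    · simp only [hαdef]
      rw [if_pos ⟨j, rfl, hj⟩, if_pos hj]
    · simp only [hαdef]
      rw [if_neg, if_neg hj]
      rintro ⟨j', hj', hev⟩
      exact hj (hψmono.injective hj' ▸ hev)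
  obtain ⟨f, -, ⟨K, hK⟩, hα⟩ := hinterp α hαbd
  have hfc : Continuous f := by
    refine (LipschitzWith.of_dist_le_mul (K := Real.toNNReal K) (f := f) fun p q => ?_).continuous
    rw [Real.dist_eq, Real.coe_toNNReal']
    calc |f p - f q| ≤ K * dist p q := hK p q
    _ ≤ max K 0 * dist p q := by
        exact mul_le_mul_of_nonneg_right (le_max_left _ _) dist_nonneg
  have hquot : Tendsto (fun j => (f (x (ψ j)) - f (y (ψ j))) / dist (x (ψ j)) (y (ψ j)))
      atTop (nhds ((f a - f b) / dist a b)) :=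
    ((((hfc.tendsto a).comp hxlim).sub ((hfc.tendsto b).comp hylim)).div hdlim hdne)
  have hquot' : Tendsto (fun j => α (ψ j)) atTop (nhds ((f a - f b) / dist a b)) := by
    refine hquot.congr fun j => ?_
    exact hα (ψ j)
  have hdouble : Tendsto (fun j : ℕ => 2 * j) atTop atTop :=
    (StrictMono.tendsto_atTop (fun i j hij => by omega))
  have hodd : Tendsto (fun j : ℕ => 2 * j + 1) atTop atTop :=
    (StrictMono.tendsto_atTop (fun i j hij => by omega))
  have heven1 : Tendsto (fun j : ℕ => α (ψ (2 * j))) atTop (nhds ((f a - f b) / dist a b)) :=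
    hquot'.comp hdouble
  have hodd1 : Tendsto (fun j : ℕ => α (ψ (2 * j + 1))) atTop (nhds ((f a - f b) / dist a b)) :=
    hquot'.comp hodd
  have he : (f a - f b) / dist a b = 1 := by
    have hfun : (fun j : ℕ => α (ψ (2 * j))) = fun _ => (1 : ℝ) :=
      funext fun j => by rw [hαψ]; simp [Nat.even_mul]
    rw [hfun] at heven1
    exact tendsto_nhds_unique heven1 tendsto_const_nhds
  have ho : (f a - f b) / dist a b = -1 := by
    have hfun : (fun j : ℕ => α (ψ (2 * j + 1))) = fun _ => (-1 : ℝ) :=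
      funext fun j => by rw [hαψ]; simp [Nat.even_add_one, Nat.even_mul]
    rw [hfun] at hodd1
    exact tendsto_nhds_unique hodd1 tendsto_const_nhds
  rw [he] at ho
  norm_num at ho
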